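/- Let E be a quantum channel and τ a positive definite density matrix with E(τ) = τ. Then for any density matrix ρ, Tr(τ^{-1} E(ρ)²) ≤ Tr(τ^{-1} ρ²). Equivalently, the weighted distance ‖ρ - τ‖²_{τ^{-1}} = Tr(τ^{-1}(ρ-τ)†(ρ-τ)) is non-increasing under E. -/

import Mathlib

open Matrix ComplexOrder
noncomputable section

abbrev Mat (d : ℕ) := Matrix (Fin d) (Fin d) ℂ

/-- A quantum channel (CPTP map), presented via a Kraus decomposition. -/
def IsCPTP {d : ℕ} (E : Mat d →ₗ[ℂ] Mat d) : Prop :=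
  ∃ (n : ℕ) (K : Fin n → Mat d),
    (∀ ρ, E ρ = ∑ i, K i * ρ * (K i)ᴴ) ∧ (∑ i, (K i)ᴴ * K i = 1)

lemma posSemidef_sum {d : ℕ} {n : ℕ} (f : Fin n → Mat d) (h : ∀ i, (f i).PosSemidef) :
    (∑ i, f i).PosSemidef := by
  refine ⟨?_, fun x => ?_⟩
  · rw [Matrix.IsHermitian, Matrix.conjTranspose_sum]
    exact Finset.sum_congr rfl fun i _ => (h i).1
  · exact (Matrix.posSemidef_sum Finset.univ fun i _ => h i).2 x

lemma trace_re_nonneg' {d : ℕ} {A : Mat d} (hA : A.PosSemidef) : 0 ≤ (A.trace).re := by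
  exact (Complex.nonneg_iff.mp hA.trace_nonneg).1

/-- If `τ > 0` is a fixed point of a quantum channel `E`, then
`Tr(τ⁻¹ E(ρ)²) ≤ Tr(τ⁻¹ ρ²)` for every density matrix `ρ`; equivalently the weighted
distance `‖ρ - τ‖²_{τ⁻¹}` is non-increasing under `E`. -/
theorem weighted_purity_nonincreasing {d : ℕ}
    (E : Mat d →ₗ[ℂ] Mat d) (hE : IsCPTP E)
    (τ : Mat d) (hτ : τ.PosDef) (hτtr : τ.trace = 1) (hfix : E τ = τ)
    (ρ : Mat d) (hρ : ρ.PosSemidef) (htr : ρ.trace = 1) :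
    Complex.re (Matrix.trace (τ⁻¹ * E ρ * E ρ)) ≤ Complex.re (Matrix.trace (τ⁻¹ * ρ * ρ))
      ∧ Complex.re (Matrix.trace (τ⁻¹ * (E ρ - τ)ᴴ * (E ρ - τ)))
        ≤ Complex.re (Matrix.trace (τ⁻¹ * (ρ - τ)ᴴ * (ρ - τ))) := by
  obtain ⟨n, K, hK, hK1⟩ := hE
  have hτH : τᴴ = τ := hτ.isHermitian
  have hρH : ρᴴ = ρ := hρ.isHermitian
  have hdet : IsUnit τ.det := (Matrix.isUnit_iff_isUnit_det τ).mp hτ.isUnit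
  have h1 : τ * τ⁻¹ = 1 := Matrix.mul_nonsing_inv τ hdet
  have h2 : τ⁻¹ * τ = 1 := Matrix.nonsing_inv_mul τ hdet
  have hτinv : (τ⁻¹).PosDef := hτ.inv
  have hτinvH : (τ⁻¹)ᴴ = τ⁻¹ := hτinv.isHermitian
  have hEρH : (E ρ)ᴴ = E ρ := by
    rw [hK]
    rw [Matrix.conjTranspose_sum]
    congr 1; funext i
    simp [Matrix.conjTranspose_mul, hρH, Matrix.mul_assoc]
  -- trace preservation
  have hTP : ∀ X : Mat d, (E X).trace = X.trace := by
    intro X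
    rw [hK, Matrix.trace_sum]
    have : ∀ i : Fin n, (K i * X * (K i)ᴴ).trace = ((K i)ᴴ * K i * X).trace := by
      intro i
      rw [Matrix.trace_mul_cycle]
    simp_rw [this]
    rw [← Matrix.trace_sum, ← Finset.sum_mul, hK1, one_mul]
  set Z : Mat d := E ρ * τ⁻¹ with hZ
  set W : Fin n → Mat d := fun i => K i * ρ - Z * K i * τ with hW
  have c1 : ∀ X : Mat d, τ⁻¹ * (τ * X) = X := by
    intro X; rw [← Matrix.mul_assoc, h2, one_mul]
  have c2 : ∀ X : Mat d, τ * (τ⁻¹ * X) = X := by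
    intro X; rw [← Matrix.mul_assoc, h1, one_mul]
  have key : ∀ i, W i * τ⁻¹ * (W i)ᴴ
      = K i * (ρ * τ⁻¹ * ρ) * (K i)ᴴ
        - (K i * ρ * (K i)ᴴ) * (τ⁻¹ * E ρ)
        - (E ρ * τ⁻¹) * (K i * ρ * (K i)ᴴ)
        + (E ρ * τ⁻¹) * (K i * τ * (K i)ᴴ) * (τ⁻¹ * E ρ) := by
    intro i
    have hWH : (W i)ᴴ = ρ * (K i)ᴴ - τ * ((K i)ᴴ * (τ⁻¹ * E ρ)) := by
      simp [hW, hZ, Matrix.conjTranspose_mul, hρH, hτH, hτinvH, hEρH, Matrix.mul_assoc]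
    rw [hWH]
    simp only [hW, hZ, Matrix.sub_mul, Matrix.mul_sub, Matrix.mul_assoc, c1, c2]
    abel_nf
  have hsum : ∑ i, W i * τ⁻¹ * (W i)ᴴ
      = E (ρ * τ⁻¹ * ρ) - E ρ * τ⁻¹ * E ρ := by
    have e1 : ∑ i, K i * (ρ * τ⁻¹ * ρ) * (K i)ᴴ = E (ρ * τ⁻¹ * ρ) := (hK _).symm
    have e2 : ∑ i, (K i * ρ * (K i)ᴴ) * (τ⁻¹ * E ρ) = E ρ * (τ⁻¹ * E ρ) := by
      rw [← Finset.sum_mul, ← hK]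
    have e3 : ∑ i, (E ρ * τ⁻¹) * (K i * ρ * (K i)ᴴ) = (E ρ * τ⁻¹) * E ρ := by
      rw [← Finset.mul_sum, ← hK]
    have e4 : ∑ i, (E ρ * τ⁻¹) * (K i * τ * (K i)ᴴ) * (τ⁻¹ * E ρ)
        = (E ρ * τ⁻¹) * τ * (τ⁻¹ * E ρ) := by
      rw [← Finset.sum_mul, ← Finset.mul_sum, ← hK, hfix]
    simp_rw [key]
    rw [Finset.sum_add_distrib, Finset.sum_sub_distrib, Finset.sum_sub_distrib, e1, e2, e3, e4]
    have : (E ρ * τ⁻¹) * τ * (τ⁻¹ * E ρ) = E ρ * τ⁻¹ * E ρ := by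
      rw [Matrix.mul_assoc (E ρ) τ⁻¹ τ, h2, mul_one, ← Matrix.mul_assoc]
    rw [this]
    rw [Matrix.mul_assoc (E ρ) τ⁻¹ (E ρ)]
    abel
  have hPSD : (∑ i, W i * τ⁻¹ * (W i)ᴴ).PosSemidef :=
    posSemidef_sum _ fun i => hτinv.posSemidef.mul_mul_conjTranspose_same (W i)
  have hmain : Complex.re (Matrix.trace (E ρ * τ⁻¹ * E ρ))
      ≤ Complex.re (Matrix.trace (ρ * τ⁻¹ * ρ)) := by
    have h0 := trace_re_nonneg' hPSD
    rw [hsum, Matrix.trace_sub, hTP] at h0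
    have := Complex.sub_re (Matrix.trace (ρ * τ⁻¹ * ρ)) (Matrix.trace (E ρ * τ⁻¹ * E ρ))
    linarith [h0, this.symm ▸ h0]
  have cyc : ∀ A : Mat d, Matrix.trace (τ⁻¹ * A * A) = Matrix.trace (A * τ⁻¹ * A) := by
    intro A; rw [Matrix.trace_mul_cycle]
  have first : Complex.re (Matrix.trace (τ⁻¹ * E ρ * E ρ))
      ≤ Complex.re (Matrix.trace (τ⁻¹ * ρ * ρ)) := by
    rw [cyc (E ρ), cyc ρ]; exact hmain
  refine ⟨first, ?_⟩
  have expand : ∀ A : Mat d, Aᴴ = A → A.trace = 1 →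
      Matrix.trace (τ⁻¹ * (A - τ)ᴴ * (A - τ)) = Matrix.trace (τ⁻¹ * A * A) - 1 := by
    intro A hA htA
    have t1 : Matrix.trace (τ⁻¹ * A * τ) = 1 := by
      rw [Matrix.trace_mul_cycle, h1, one_mul, htA]
    have t2 : Matrix.trace (τ⁻¹ * τ * A) = 1 := by rw [h2, one_mul, htA]
    have t3 : Matrix.trace (τ⁻¹ * τ * τ) = 1 := by rw [h2, one_mul, hτtr]
    simp only [Matrix.conjTranspose_sub, hA, hτH, Matrix.sub_mul, Matrix.mul_sub,
      Matrix.trace_sub]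
    rw [t1, t2, t3]
    ring
  rw [expand (E ρ) hEρH (by rw [hTP, htr]), expand ρ hρH htr]
  simp only [Complex.sub_re, Complex.one_re]
  linarith [first]
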